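/- Let P be an Eulerian path in a multi-digraph G, let Q be a subcircuit of P, and let R = {R_1, ..., R_k} be the set of all daughters of Q (the maximal proper subcircuits of Q). If the set of edges Q ∖ (R_1 ∪ ... ∪ R_k), taken in the order induced by P, forms an oriented circuit in G, then this oriented circuit is in fact an oriented cycle, i.e., it contains no smaller closed orientation-respecting walk as a proper subwalk. -/

import Mathlib

/-- A multi-digraph on vertex type `V` with edge type `E`: each edge has a source and a
target vertex. Parallel edges and loops are allowed. -/
structure MultiDigraph (V : Type) (E : Type) where
  src : E → V
  tgt : E → V

namespace MultiDigraph

variable {V E : Type}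

/-- Two vertices are adjacent (in the undirected sense) if some edge joins them. -/
def Adj (G : MultiDigraph V E) (u v : V) : Prop :=
  (∃ e, G.src e = u ∧ G.tgt e = v) ∨ (∃ e, G.src e = v ∧ G.tgt e = u)

/-- A multi-digraph is connected if there is an undirected walk between any two vertices. -/
def Connected (G : MultiDigraph V E) : Prop :=
  ∀ u v : V, Relation.ReflTransGen G.Adj u v

/-- An Eulerian path with `n` edges, given by its vertex sequence `verts` and the order
`edges` in which the edges are traversed: every edge is traversed exactly once
(`edges` is bijective), respecting orientations, and the `i`-th edge goes from the
`i`-th vertex to the `(i+1)`-st vertex of the sequence. -/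
structure IsEulerianPath (G : MultiDigraph V E) (n : ℕ)
    (verts : Fin (n + 1) → V) (edges : Fin n → E) : Prop where
  edges_bij : Function.Bijective edges
  src_eq : ∀ i : Fin n, G.src (edges i) = verts i.castSucc
  tgt_eq : ∀ i : Fin n, G.tgt (edges i) = verts i.succ

/-- The out-degree of a vertex: the number of edges having it as source. -/
def outDegree (G : MultiDigraph V E) [Fintype E] [DecidableEq V] (v : V) : ℕ :=
  (Finset.univ.filter fun e => G.src e = v).card

/-- The in-degree of a vertex: the number of edges having it as target. -/
def inDegree (G : MultiDigraph V E) [Fintype E] [DecidableEq V] (v : V) : ℕ :=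
  (Finset.univ.filter fun e => G.tgt e = v).card

/-- The total degree of a vertex: its in-degree plus its out-degree. -/
def degree (G : MultiDigraph V E) [Fintype E] [DecidableEq V] (v : V) : ℕ :=
  G.outDegree v + G.inDegree v

end MultiDigraph

namespace MultiDigraph

variable {V E : Type}

/-- A subcircuit of an Eulerian path with vertex sequence `verts`, given by the interval
of path positions `[a, b)`: it consists of the consecutive edges from position `a` to
position `b − 1`, and it is an oriented circuit precisely when `verts a = verts b`. -/
def IsSubcircuit {n : ℕ} (verts : Fin (n + 1) → V) (a b : Fin (n + 1)) : Prop :=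
  a < b ∧ verts a = verts b

/-- The interval `[c, d)` is properly nested in the interval `[a, b)`. -/
def ProperlyNested {n : ℕ} (a b c d : Fin (n + 1)) : Prop :=
  a ≤ c ∧ d ≤ b ∧ (c, d) ≠ (a, b)

/-- The subcircuit `[c, d)` is a daughter of the subcircuit `[a, b)`: it is properly
nested in `[a, b)` and there is no subcircuit strictly between them. -/
def IsDaughter {n : ℕ} (verts : Fin (n + 1) → V) (a b c d : Fin (n + 1)) : Prop :=
  IsSubcircuit verts c d ∧ ProperlyNested a b c d ∧
    ¬ ∃ e f : Fin (n + 1), IsSubcircuit verts e f ∧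
      ProperlyNested e f c d ∧ ProperlyNested a b e f

open scoped Classical in
/-- The edges of the subcircuit `[a, b)` that do not lie in any of its daughters, taken in
the order induced by the path. -/
noncomputable def remainingEdges {n : ℕ} (verts : Fin (n + 1) → V) (edges : Fin n → E)
    (a b : Fin (n + 1)) : List E :=
  ((Finset.univ.filter fun k : Fin n =>
      (a : ℕ) ≤ (k : ℕ) ∧ (k : ℕ) < (b : ℕ) ∧
      ¬ ∃ c d : Fin (n + 1), IsDaughter verts a b c d ∧
        (c : ℕ) ≤ (k : ℕ) ∧ (k : ℕ) < (d : ℕ)).sort (· ≤ ·)).map edges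

/-- A nonempty list of edges forms a closed orientation-respecting walk: the target of
each edge is the source of the next, and the target of the last edge is the source of the
first. -/
def IsClosedWalkList (G : MultiDigraph V E) (c : List E) : Prop :=
  c ≠ [] ∧ List.Chain' (fun e f => G.tgt e = G.src f) c ∧
    ∀ x ∈ c.head?, ∀ y ∈ c.getLast?, G.tgt y = G.src x

/-- An oriented cycle: a closed orientation-respecting walk containing no smaller closed
walk, i.e. one visiting no vertex twice (the sources of its edges are pairwise distinct). -/
def IsOrientedCycleList (G : MultiDigraph V E) (c : List E) : Prop :=
  G.IsClosedWalkList c ∧ (c.map G.src).Nodup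

end MultiDigraph

/-- Every subcircuit properly nested in `[a, b)` is contained in a daughter of `[a, b)`. -/
theorem exists_daughter_containing {V : Type} {n : ℕ} (verts : Fin (n + 1) → V)
    (a b c d : Fin (n + 1)) (h1 : MultiDigraph.IsSubcircuit verts c d)
    (h2 : MultiDigraph.ProperlyNested a b c d) :
    ∃ e f : Fin (n + 1), MultiDigraph.IsDaughter verts a b e f ∧ e ≤ c ∧ d ≤ f := by
  classical
  set S : Finset (Fin (n + 1) × Fin (n + 1)) :=
    Finset.univ.filter (fun p => MultiDigraph.IsSubcircuit verts p.1 p.2 ∧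
      MultiDigraph.ProperlyNested a b p.1 p.2 ∧ p.1 ≤ c ∧ d ≤ p.2) with hS
  have hne : S.Nonempty := ⟨(c, d), by simp [hS, h1, h2]⟩
  obtain ⟨p, hp, hmax⟩ := S.exists_max_image (fun p => (p.2 : ℕ) - (p.1 : ℕ)) hne
  rw [hS, Finset.mem_filter] at hp
  obtain ⟨-, hsub, hnest, hc, hd⟩ := hp
  refine ⟨p.1, p.2, ⟨hsub, hnest, ?_⟩, hc, hd⟩
  rintro ⟨e, f, hef, ⟨he1, he2, hne'⟩, hn2⟩
  have hefS : (e, f) ∈ S := by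
    rw [hS, Finset.mem_filter]
    exact ⟨Finset.mem_univ _, hef, hn2, le_trans he1 hc, le_trans hd he2⟩
  have := hmax (e, f) hefS
  have h12 : (p.1 : ℕ) < (p.2 : ℕ) := hsub.1
  have he1' : (e : ℕ) ≤ (p.1 : ℕ) := he1
  have he2' : (p.2 : ℕ) ≤ (f : ℕ) := he2
  have hne'' : (p.1 : ℕ) ≠ (e : ℕ) ∨ (p.2 : ℕ) ≠ (f : ℕ) := by
    by_contra hcon
    push_neg at hcon
    exact hne' (Prod.ext (Fin.val_injective hcon.1) (Fin.val_injective hcon.2))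
  simp only at this
  omega

theorem remaining_circuit_is_cycle
    {V E : Type} (G : MultiDigraph V E)
    (n : ℕ) (verts : Fin (n + 1) → V) (edges : Fin n → E)
    (hP : G.IsEulerianPath n verts edges)
    (a b : Fin (n + 1)) (hQ : MultiDigraph.IsSubcircuit verts a b)
    (hcirc : G.IsClosedWalkList (MultiDigraph.remainingEdges verts edges a b)) :
    G.IsOrientedCycleList (MultiDigraph.remainingEdges verts edges a b) := by
  classical
  refine ⟨hcirc, ?_⟩
  unfold MultiDigraph.remainingEdges
  rw [List.map_map]
  set T := (Finset.univ.filter fun k : Fin n =>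
      (a : ℕ) ≤ (k : ℕ) ∧ (k : ℕ) < (b : ℕ) ∧
      ¬ ∃ c d : Fin (n + 1), MultiDigraph.IsDaughter verts a b c d ∧
        (c : ℕ) ≤ (k : ℕ) ∧ (k : ℕ) < (d : ℕ)) with hT
  -- key claim: two distinct remaining positions have distinct edge sources
  have key : ∀ k ∈ T, ∀ l ∈ T, (k : ℕ) < (l : ℕ) →
      G.src (edges k) ≠ G.src (edges l) := by
    intro k hk l hl hkl hsrc
    rw [hT, Finset.mem_filter] at hk hl
    obtain ⟨-, hak, hkb, hknd⟩ := hk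
    obtain ⟨-, hal, hlb, -⟩ := hl
    have hveq : verts k.castSucc = verts l.castSucc := by
      rw [← hP.src_eq k, ← hP.src_eq l, hsrc]
    have hsub : MultiDigraph.IsSubcircuit verts k.castSucc l.castSucc :=
      ⟨by simp only [Fin.lt_def, Fin.coe_castSucc]; exact hkl, hveq⟩
    have hnest : MultiDigraph.ProperlyNested a b k.castSucc l.castSucc := by
      refine ⟨by simp only [Fin.le_def, Fin.coe_castSucc]; exact hak, by simp only [Fin.le_def, Fin.coe_castSucc]; exact le_of_lt hlb, ?_⟩
      intro hcon
      have hb : l.castSucc = b := congrArg Prod.snd hcon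
      have : (l : ℕ) = (b : ℕ) := by rw [← hb]; rfl
      omega
    obtain ⟨e, f, hdau, hec, hdf⟩ := exists_daughter_containing verts a b _ _ hsub hnest
    exact hknd ⟨e, f, hdau, le_trans hec (by simp), lt_of_lt_of_le hkl (by exact Fin.le_def.mp hdf)⟩
  apply List.Nodup.map_on
  · intro k hk l hl hfe
    rw [Finset.mem_sort] at hk hl
    rcases lt_trichotomy (k : ℕ) (l : ℕ) with h | h | h
    · exact absurd hfe (key k hk l hl h)
    · exact Fin.val_injective h
    · exact absurd hfe.symm (key l hl k hk h)
  · exact (T.sort_nodup _)
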